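/- Let H be a unital RKHA (the constant function 1 belongs to H). Then for every f ∈ H the multiplication operator M_f : H → H, M_f(g) = fg, is bounded, and (1/‖1‖_H) ‖f‖_H ≤ ‖M_f‖_op ≤ ‖Δ‖_op ‖f‖_H. Hence the operator norm on H is equivalent to the Hilbert space norm. -/

import Mathlib

open scoped ComplexInnerProductSpace

noncomputable section

/-- An abstract Hilbert tensor product structure: a bilinear map `tmul` whose
elementary tensors satisfy the inner product identity
`⟪a ⊗ b, c ⊗ d⟫ = ⟪a, c⟫ ⟪b, d⟫` and whose elementary tensors span a dense subspace. -/
structure TensorLike (H K HT : Type*) [NormedAddCommGroup H] [InnerProductSpace ℂ H]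
    [NormedAddCommGroup K] [InnerProductSpace ℂ K]
    [NormedAddCommGroup HT] [InnerProductSpace ℂ HT] where
  tmul : H →ₗ[ℂ] K →ₗ[ℂ] HT
  inner_tmul : ∀ (a c : H) (b d : K),
    ⟪tmul a b, tmul c d⟫ = ⟪a, c⟫ * ⟪b, d⟫
  dense_span : Dense (Submodule.span ℂ (Set.range fun p : H × K => tmul p.1 p.2) : Set HT)

theorem TensorLike.norm_tmul {H K HT : Type*} [NormedAddCommGroup H] [InnerProductSpace ℂ H]
    [NormedAddCommGroup K] [InnerProductSpace ℂ K]
    [NormedAddCommGroup HT] [InnerProductSpace ℂ HT]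
    (T : TensorLike H K HT) (a : H) (b : K) : ‖T.tmul a b‖ = ‖a‖ * ‖b‖ := by
  have h := T.inner_tmul a a b b
  rw [inner_self_eq_norm_sq_to_K, inner_self_eq_norm_sq_to_K, inner_self_eq_norm_sq_to_K] at h
  have h2 : ‖T.tmul a b‖ ^ 2 = ‖a‖ ^ 2 * ‖b‖ ^ 2 := by exact_mod_cast h
  nlinarith [norm_nonneg (T.tmul a b), norm_nonneg a, norm_nonneg b,
    mul_nonneg (norm_nonneg a) (norm_nonneg b)]

/-- in a unital RKHA, every multiplication operator `M_f` is bounded with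
`(1/‖1‖) ‖f‖ ≤ ‖M_f‖ ≤ ‖Δ‖ ‖f‖`. -/
theorem stmt_2 {X H HT : Type*} [Nonempty X]
    [NormedAddCommGroup H] [InnerProductSpace ℂ H] [CompleteSpace H]
    [NormedAddCommGroup HT] [InnerProductSpace ℂ HT] [CompleteSpace HT]
    (k : X → H) (hk : Dense (Submodule.span ℂ (Set.range k) : Set H))
    (T : TensorLike H H HT) (Δ : H →L[ℂ] HT)
    (hΔ : ∀ x, Δ (k x) = T.tmul (k x) (k x))
    (one : H) (hone : ∀ x, ⟪k x, one⟫ = 1) (f : H) :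
    ∃ M : H →L[ℂ] H, (∀ g, M g = ContinuousLinearMap.adjoint Δ (T.tmul f g)) ∧
      (1 / ‖one‖) * ‖f‖ ≤ ‖M‖ ∧ ‖M‖ ≤ ‖Δ‖ * ‖f‖ := by
  set A := ContinuousLinearMap.adjoint Δ with hA
  set L : H →ₗ[ℂ] H := A.toLinearMap ∘ₗ T.tmul f with hL
  have hbound : ∀ g, ‖L g‖ ≤ (‖Δ‖ * ‖f‖) * ‖g‖ := by
    intro g
    calc ‖A (T.tmul f g)‖ ≤ ‖A‖ * ‖T.tmul f g‖ := A.le_opNorm _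
    _ = ‖Δ‖ * (‖f‖ * ‖g‖) := by
          rw [T.norm_tmul, hA]
          congr 1
          exact LinearIsometryEquiv.norm_map _ Δ
    _ = (‖Δ‖ * ‖f‖) * ‖g‖ := by ring
  refine ⟨L.mkContinuous (‖Δ‖ * ‖f‖) hbound, fun g => rfl, ?_, ?_⟩
  · -- lower bound
    set M := L.mkContinuous (‖Δ‖ * ‖f‖) hbound with hM
    have hMone : M one = f := by
      refine hk.eq_of_inner_right ℂ fun v hv => ?_
      induction hv using Submodule.span_induction with
      | mem v hv =>
        obtain ⟨x, rfl⟩ := hv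
        have : (⟪k x, M one⟫ : ℂ) = ⟪Δ (k x), T.tmul f one⟫ := by
          show (⟪k x, A (T.tmul f one)⟫ : ℂ) = _
          rw [hA, ContinuousLinearMap.adjoint_inner_right]
        rw [this, hΔ, T.inner_tmul, hone, mul_one]
      | zero => simp
      | add u w hu hw ihu ihw => simp [inner_add_left, ihu, ihw]
      | smul c u hu ih => simp [inner_smul_left, ih]
    have hone0 : one ≠ 0 := by
      intro h
      have := hone (Classical.arbitrary X)
      rw [h, inner_zero_right] at this
      exact one_ne_zero this.symm
    have hpos : (0 : ℝ) < ‖one‖ := norm_pos_iff.2 hone0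
    have : ‖f‖ ≤ ‖M‖ * ‖one‖ := by
      rw [← hMone]; exact M.le_opNorm one
    rw [div_mul_eq_mul_div, one_mul, div_le_iff₀ hpos]
    linarith
  · exact LinearMap.mkContinuous_norm_le _ (by positivity) _
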